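/- Taylor remainder bound for the integrated matrix exponential (underlying the interval term E(τ)): let A ∈ ℝ^{p×p}, τ ≥ 0, and r ∈ ℕ with ‖A‖_∞ τ < r + 2, where ‖·‖_∞ is the operator norm induced by the infinity vector norm. Then the integral ∫₀^τ exp(As) ds equals Σ_{i=0}^{∞} A^i τ^{i+1} / (i+1)!, and ‖∫₀^τ exp(As) ds − Σ_{i=0}^{r} A^i τ^{i+1} / (i+1)!‖_∞ ≤ τ · ((‖A‖_∞ τ)^{r+1} / (r+1)!) · (r+2) / (r + 2 − ‖A‖_∞ τ). Consequently, for any z₀ ∈ ℝ^{p×q} and B ∈ ℝ^{p×q}, the solution of ż(t) = A z(t) + B with z(0) = z₀ satisfies z(τ) = exp(Aτ) z₀ + (∫₀^τ exp(As) ds) B. -/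

import Mathlib

-- Equip matrices with the operator norm induced by the vector infinity norm
-- (the maximum absolute row sum), which is submultiplicative.
attribute [local instance]
  Matrix.linftyOpNormedAddCommGroup Matrix.linftyOpNormedRing
  Matrix.linftyOpNormedSpace Matrix.linftyOpNormedAlgebra

open scoped Nat

namespace MatExpAux

variable {p : ℕ} (A : Matrix (Fin p) (Fin p) ℝ)

lemma norm_pow_le (i : ℕ) : ‖A ^ i‖ ≤ ‖A‖ ^ i := by
  induction i with
  | zero =>
    simp only [pow_zero]
    rcases Nat.eq_zero_or_pos p with hp | hp
    · subst hp
      have : (1 : Matrix (Fin 0) (Fin 0) ℝ) = 0 := Subsingleton.elim _ _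
      simp [this]
    · haveI : Nonempty (Fin p) := ⟨⟨0, hp⟩⟩
      rw [norm_one]
  | succ i ih =>
    rw [pow_succ, pow_succ]
    calc ‖A ^ i * A‖ ≤ ‖A ^ i‖ * ‖A‖ := Matrix.linfty_opNorm_mul _ _
    _ ≤ ‖A‖ ^ i * ‖A‖ := mul_le_mul_of_nonneg_right ih (norm_nonneg A)

/-- the terms of the integrated series -/
noncomputable def f (t : ℝ) (i : ℕ) : Matrix (Fin p) (Fin p) ℝ :=
  (((i + 1)! : ℝ)⁻¹ * t ^ (i + 1)) • A ^ i

lemma norm_f_le (t : ℝ) (i : ℕ) :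
    ‖f A t i‖ ≤ |t| * ((|t| * ‖A‖) ^ i / i !) := by
  rw [f, norm_smul]
  have h1 : ‖(((i + 1)! : ℝ)⁻¹ * t ^ (i + 1))‖ ≤ |t| ^ (i+1) / i ! := by
    rw [norm_mul, norm_inv, norm_pow, Real.norm_eq_abs, Real.norm_eq_abs,
      Nat.abs_cast, div_eq_mul_inv, mul_comm (((i + 1)! : ℝ))⁻¹]
    gcongr
    omega
  calc ‖(((i + 1)! : ℝ)⁻¹ * t ^ (i + 1))‖ * ‖A ^ i‖
      ≤ (|t| ^ (i+1) / i !) * ‖A‖ ^ i := by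
        apply mul_le_mul h1 (norm_pow_le A i) (norm_nonneg _) (by positivity)
    _ = |t| * ((|t| * ‖A‖) ^ i / i !) := by ring

lemma summable_f (t : ℝ) : Summable (f A t) := by
  apply Summable.of_norm_bounded (Summable.mul_left |t|
    (Real.summable_pow_div_factorial (|t| * ‖A‖))) (norm_f_le A t)

lemma exp_eq (t : ℝ) :
    NormedSpace.exp (t • A) = ∑' i : ℕ, ((i ! : ℝ)⁻¹ * t ^ i) • A ^ i := by
  rw [NormedSpace.exp_eq_tsum (𝕂 := ℝ)]
  exact tsum_congr fun i => by rw [smul_pow, smul_smul]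

lemma summable_expf (t : ℝ) :
    Summable (fun i : ℕ => ((i ! : ℝ)⁻¹ * t ^ i) • A ^ i) := by
  have := NormedSpace.expSeries_summable' (𝕂 := ℝ) (t • A)
  refine this.congr fun i => ?_
  rw [smul_pow, smul_smul]

set_option maxHeartbeats 1000000 in
lemma hasDerivAt_g (t : ℝ) :
    HasDerivAt (fun s => ∑' i : ℕ, f A s i) (NormedSpace.exp (t • A)) t := by
  set R := |t| + 1 with hR
  have hRpos : 0 < R := by positivity
  have htmem : t ∈ Set.Ioo (-R) R := by
    constructor <;> [nlinarith [abs_nonneg t, neg_abs_le t]; nlinarith [le_abs_self t]]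
  have key : HasDerivAt (fun s => ∑' i : ℕ, f A s i)
      (∑' i : ℕ, ((i ! : ℝ)⁻¹ * t ^ i) • A ^ i) t := by
    apply hasDerivAt_tsum_of_isPreconnected
      (Real.summable_pow_div_factorial (R * ‖A‖)) isOpen_Ioo
      (isPreconnected_Ioo) (g' := fun i s => ((i ! : ℝ)⁻¹ * s ^ i) • A ^ i)
      (u := fun i => (R * ‖A‖) ^ i / i !) ?_ ?_ htmem (summable_f A t) htmem
    · intro i s hs
      have h1 : HasDerivAt (fun s : ℝ => ((i + 1)! : ℝ)⁻¹ * s ^ (i + 1))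
          (((i + 1)! : ℝ)⁻¹ * ((i + 1) * s ^ i)) s := by
        have := (hasDerivAt_pow (i + 1) s).const_mul (((i + 1)! : ℝ)⁻¹)
        simpa using this
      have h2 : (((i + 1)! : ℝ)⁻¹ * ((i + 1) * s ^ i)) = (i ! : ℝ)⁻¹ * s ^ i := by
        rw [Nat.factorial_succ]
        push_cast
        rw [mul_inv]
        have : ((i:ℝ) + 1) ≠ 0 := by positivity
        field_simp
      rw [h2] at h1
      simpa [f] using h1.smul_const (A ^ i)
    · intro i s hs
      rw [norm_smul, norm_mul, norm_inv, norm_pow, Real.norm_eq_abs, Real.norm_eq_abs,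
        Nat.abs_cast]
      have hsR : |s| ≤ R := by
        rcases hs with ⟨h1, h2⟩
        rw [abs_le]; constructor <;> linarith
      calc (i ! : ℝ)⁻¹ * |s| ^ i * ‖A ^ i‖
          ≤ (i ! : ℝ)⁻¹ * R ^ i * ‖A‖ ^ i := by
            apply mul_le_mul _ (norm_pow_le A i) (norm_nonneg _) (by positivity)
            gcongr
        _ = (R * ‖A‖) ^ i / i ! := by rw [mul_pow]; ring
  rwa [exp_eq A t]

lemma g_zero : ∑' i : ℕ, f A 0 i = 0 := by
  have : ∀ i : ℕ, f A 0 i = 0 := by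
    intro i; simp [f]
  simp [this]

lemma integral_eq (τ : ℝ) :
    (∫ s in (0:ℝ)..τ, NormedSpace.exp (s • A)) = ∑' i : ℕ, f A τ i := by
  have hcont : Continuous (fun s : ℝ => NormedSpace.exp (s • A)) :=
    NormedSpace.exp_continuous.comp (continuous_id.smul continuous_const)
  have := intervalIntegral.integral_eq_sub_of_hasDerivAt
    (f := fun s => ∑' i : ℕ, f A s i) (f' := fun s => NormedSpace.exp (s • A))
    (a := 0) (b := τ) (fun t _ => hasDerivAt_g A t) (hcont.intervalIntegrable 0 τ)
  rw [this]
  simp only [g_zero A, sub_zero]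

lemma mul_g (t : ℝ) :
    A * (∑' i : ℕ, f A t i) = NormedSpace.exp (t • A) - 1 := by
  have h1 : A * (∑' i : ℕ, f A t i) = ∑' i : ℕ, A * f A t i :=
    (Summable.tsum_mul_left A (summable_f A t)).symm
  have h2 : ∀ i : ℕ, A * f A t i = (((i+1)! : ℝ)⁻¹ * t ^ (i+1)) • A ^ (i+1) := by
    intro i
    rw [f, mul_smul_comm, ← pow_succ']
  rw [h1]
  rw [tsum_congr h2]
  rw [exp_eq A t]
  rw [Summable.tsum_eq_zero_add (summable_expf A t)]
  simp only [pow_zero, Nat.factorial_zero, Nat.cast_one, inv_one, one_mul, one_smul]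
  abel

end MatExpAux

lemma fact_aux (r j : ℕ) : (r+1)! * (r+2)^j ≤ (j + r + 2)! := by
  induction j with
  | zero =>
    simp only [pow_zero, mul_one, Nat.zero_add]
    exact Nat.factorial_le (by omega)
  | succ j ih =>
    calc (r+1)! * (r+2)^(j+1) = ((r+1)! * (r+2)^j) * (r+2) := by ring
      _ ≤ (j + r + 2)! * (j + r + 3) := Nat.mul_le_mul ih (by omega)
      _ = (j + 1 + r + 2)! := by
          have e : j + 1 + r + 2 = (j + r + 2) + 1 := by omega
          have e3 : j + r + 3 = (j + r + 2) + 1 := by omega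
          rw [e, e3, Nat.factorial_succ (j + r + 2), Nat.mul_comm]

namespace MatExpAux

noncomputable def mulRightCLM {p q : ℕ} (C : Matrix (Fin p) (Fin q) ℝ) :
    Matrix (Fin p) (Fin p) ℝ →L[ℝ] Matrix (Fin p) (Fin q) ℝ :=
  LinearMap.toContinuousLinearMap
    { toFun := fun X => X * C
      map_add' := fun x y => Matrix.add_mul x y C
      map_smul' := fun c x => by simp [Matrix.smul_mul] }

@[simp] lemma mulRightCLM_apply {p q : ℕ} (C : Matrix (Fin p) (Fin q) ℝ)
    (X : Matrix (Fin p) (Fin p) ℝ) : mulRightCLM C X = X * C := rfl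

end MatExpAux

open MatExpAux

theorem matrix_exp_integral_taylor_remainder_bound {p q : ℕ}
    (A : Matrix (Fin p) (Fin p) ℝ) (τ : ℝ) (hτ : 0 ≤ τ) (r : ℕ)
    (h : ‖A‖ * τ < r + 2) :
    (∫ s in (0:ℝ)..τ, NormedSpace.exp (s • A))
        = ∑' i : ℕ, (((i + 1)! : ℝ)⁻¹ * τ ^ (i + 1)) • A ^ i ∧
    ‖(∫ s in (0:ℝ)..τ, NormedSpace.exp (s • A))
        - ∑ i ∈ Finset.range (r + 1), (((i + 1)! : ℝ)⁻¹ * τ ^ (i + 1)) • A ^ i‖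
      ≤ τ * ((‖A‖ * τ) ^ (r + 1) / (r + 1)! * ((r + 2) / (r + 2 - ‖A‖ * τ))) ∧
    ∀ (z₀ B : Matrix (Fin p) (Fin q) ℝ) (z : ℝ → Matrix (Fin p) (Fin q) ℝ),
      (∀ t, HasDerivAt z (A * z t + B) t) → z 0 = z₀ →
      z τ = NormedSpace.exp (τ • A) * z₀ + (∫ s in (0:ℝ)..τ, NormedSpace.exp (s • A)) * B := by
  have hint : (∫ s in (0:ℝ)..τ, NormedSpace.exp (s • A)) = ∑' i : ℕ, f A τ i :=
    integral_eq A τ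
  have hpart1 : (∫ s in (0:ℝ)..τ, NormedSpace.exp (s • A))
      = ∑' i : ℕ, (((i + 1)! : ℝ)⁻¹ * τ ^ (i + 1)) • A ^ i := hint
  refine ⟨hpart1, ?_, ?_⟩
  · -- remainder bound
    set x := ‖A‖ * τ with hxdef
    have hx0 : 0 ≤ x := mul_nonneg (norm_nonneg A) hτ
    have hr2 : (0:ℝ) < (r:ℝ) + 2 := by positivity
    have hρ : x / ((r:ℝ) + 2) < 1 := (div_lt_one hr2).mpr h
    have hρ0 : 0 ≤ x / ((r:ℝ) + 2) := div_nonneg hx0 hr2.le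
    set c : ℝ := τ * (x ^ (r+1) / (r+1)!) with hcdef
    have hc0 : 0 ≤ c := by positivity
    have key : ∀ j : ℕ, ‖f A τ (j + (r+1))‖ ≤ c * (x / ((r:ℝ)+2)) ^ j := by
      intro j
      have e : j + (r+1) = j + r + 1 := by omega
      have hfact : ((r+1)! * (r+2)^j : ℝ) ≤ ((j + r + 2)! : ℝ) := by
        exact_mod_cast fact_aux r j
      have h1 : ‖f A τ (j + (r+1))‖
          ≤ ((j + r + 2)! : ℝ)⁻¹ * τ ^ (j + r + 2) * ‖A‖ ^ (j + r + 1) := by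
        rw [f, norm_smul, norm_mul, norm_inv, norm_pow, Real.norm_eq_abs, Real.norm_eq_abs,
          Nat.abs_cast, abs_of_nonneg hτ, e]
        have e2 : j + r + 1 + 1 = j + r + 2 := by omega
        rw [e2]
        exact mul_le_mul_of_nonneg_left (norm_pow_le A _) (by positivity)
      have hbeq : c * (x / ((r:ℝ)+2)) ^ j
          = ((r+1)! * (r+2)^j : ℝ)⁻¹ * τ ^ (j + r + 2) * ‖A‖ ^ (j + r + 1) := by
        rw [hcdef, hxdef]
        rw [div_pow, mul_pow, mul_pow]
        have h1 : ((r+1)! : ℝ) ≠ 0 := by positivity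
        have h2 : (((r:ℝ)+2)^j) ≠ 0 := by positivity
        field_simp
        ring
      rw [hbeq]
      have hinv : ((j + r + 2)! : ℝ)⁻¹ ≤ ((r+1)! * (r+2)^j : ℝ)⁻¹ :=
        inv_anti₀ (by positivity) hfact
      refine h1.trans ?_
      gcongr
    have hbsum : Summable (fun j : ℕ => c * (x / ((r:ℝ)+2)) ^ j) :=
      (summable_geometric_of_lt_one hρ0 hρ).mul_left c
    have hsum_norm : Summable fun j : ℕ => ‖f A τ (j + (r+1))‖ :=
      Summable.of_nonneg_of_le (fun _ => norm_nonneg _) key hbsum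
    have hdiff : (∑' i : ℕ, f A τ i) - ∑ i ∈ Finset.range (r+1), f A τ i
        = ∑' j : ℕ, f A τ (j + (r+1)) := by
      rw [← Summable.sum_add_tsum_nat_add (r+1) (summable_f A τ)]
      exact add_sub_cancel_left _ _
    have hnorm : ‖(∫ s in (0:ℝ)..τ, NormedSpace.exp (s • A))
        - ∑ i ∈ Finset.range (r + 1), (((i + 1)! : ℝ)⁻¹ * τ ^ (i + 1)) • A ^ i‖
        = ‖∑' j : ℕ, f A τ (j + (r+1))‖ := by
      rw [hint, ← hdiff]
      rfl
    rw [hnorm]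
    calc ‖∑' j : ℕ, f A τ (j + (r+1))‖ ≤ ∑' j : ℕ, ‖f A τ (j + (r+1))‖ :=
          norm_tsum_le_tsum_norm hsum_norm
      _ ≤ ∑' j : ℕ, c * (x / ((r:ℝ)+2)) ^ j := Summable.tsum_le_tsum key hsum_norm hbsum
      _ = c * (1 - x / ((r:ℝ)+2))⁻¹ := by
          rw [tsum_mul_left, tsum_geometric_of_lt_one hρ0 hρ]
      _ = τ * (x ^ (r + 1) / (r + 1)! * (((r:ℝ) + 2) / ((r:ℝ) + 2 - x))) := by
          rw [hcdef]
          have h1 : ((r:ℝ) + 2 - x) ≠ 0 := by linarith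
          have h2 : ((r:ℝ) + 2) ≠ 0 := by positivity
          have h3 : ((r+1)! : ℝ) ≠ 0 := by positivity
          field_simp
  · -- ODE part
    intro z₀ B z hz hz0
    set y : ℝ → Matrix (Fin p) (Fin q) ℝ :=
      fun t => NormedSpace.exp (t • A) * z₀ + (∑' i : ℕ, f A t i) * B with hy_def
    have hy : ∀ t, HasDerivAt y (A * y t + B) t := by
      intro t
      have h1 : HasDerivAt (fun u : ℝ => NormedSpace.exp (u • A) * z₀)
          ((A * NormedSpace.exp (t • A)) * z₀) t :=
        (mulRightCLM z₀).hasFDerivAt.comp_hasDerivAt t (hasDerivAt_exp_smul_const' A t)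
      have h2 : HasDerivAt (fun u : ℝ => (∑' i : ℕ, f A u i) * B)
          (NormedSpace.exp (t • A) * B) t :=
        (mulRightCLM B).hasFDerivAt.comp_hasDerivAt t (hasDerivAt_g A t)
      have h3 := h1.add h2
      refine h3.congr_deriv ?_
      have hg := mul_g A t
      rw [hy_def]
      simp only [Matrix.mul_add, ← Matrix.mul_assoc, hg, Matrix.sub_mul, Matrix.one_mul]
      abel
    have hv : ∀ t : ℝ, LipschitzWith ‖A‖₊ (fun m : Matrix (Fin p) (Fin q) ℝ => A * m + B) := by
      intro t
      apply LipschitzWith.of_dist_le_mul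
      intro m₁ m₂
      rw [dist_eq_norm, dist_eq_norm]
      have e : (A * m₁ + B) - (A * m₂ + B) = A * (m₁ - m₂) := by
        rw [Matrix.mul_sub]; abel
      rw [e, coe_nnnorm]
      exact Matrix.linfty_opNorm_mul _ _
    have heq : Set.EqOn z y (Set.Icc 0 τ) := by
      apply ODE_solution_unique (v := fun _ m => A * m + B) hv
      · exact fun t _ => (hz t).continuousAt.continuousWithinAt
      · exact fun t _ => (hz t).hasDerivWithinAt
      · exact fun t _ => (hy t).continuousAt.continuousWithinAt
      · exact fun t _ => (hy t).hasDerivWithinAt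
      · rw [hz0, hy_def]
        simp [g_zero, NormedSpace.exp_zero]
    have hzτ : z τ = y τ := heq (Set.right_mem_Icc.mpr hτ)
    rw [hzτ, hy_def, hint]
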